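/- Let (R,w) = (K[X,Y],(q_1,q_2)) with q_1 < q_2 coprime, and let I be a monomial ideal minimally generated in degrees d_1 < d_2 < … < d_r such that the monomials of I_{d_i} form a lexsegment for every i = 1,…,r. Then I is a lexicographic ideal if and only if q_1 ∣ d_1, or q_1 ∤ d_1 and there exists 1 < s ≤ r such that q_1 ∣ d_s and d_s ≤ min{δ_i}, where for each generating degree d_i not divisible by q_1, δ_i denotes the smallest integer of the form d_i + βq_2 (β ∈ ℕ) divisible by q_1. -/

import Mathlib

open MvPolynomial

/-- The lexicographic order on exponents of monomials (`LexLT μ ν` means `X^μ < X^ν`),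
for the variable order `X > Y`. -/
def LexLT {n : ℕ} (μ ν : Fin n →₀ ℕ) : Prop :=
  ∃ k, μ k < ν k ∧ ∀ s, s < k → μ s = ν s

/-- `L` is a lexsegment of weighted degree `d`. -/
def IsLexSeg {n : ℕ} (w : Fin n → ℕ) (L : Set (Fin n →₀ ℕ)) (d : ℕ) : Prop :=
  (∀ μ ∈ L, Finsupp.weight w μ = d) ∧
  (∀ μ ∈ L, ∀ ν : Fin n →₀ ℕ, Finsupp.weight w ν = d → LexLT μ ν → ν ∈ L)

/-- `μ` is (the exponent of) a minimal monomial generator of the monomial ideal `I`. -/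
def MinGen {K : Type*} [Field K] {n : ℕ} (I : Ideal (MvPolynomial (Fin n) K))
    (μ : Fin n →₀ ℕ) : Prop :=
  (monomial μ (1 : K) : MvPolynomial (Fin n) K) ∈ I ∧
    ∀ s ∈ μ.support,
      (monomial (μ - Finsupp.single s 1) (1 : K) : MvPolynomial (Fin n) K) ∉ I

/-- A monomial ideal is lexicographic if, in each weighted degree, its monomials form a
lexsegment. -/
def IsLexIdealMon {K : Type*} [Field K] {n : ℕ} (w : Fin n → ℕ)
    (I : Ideal (MvPolynomial (Fin n) K)) : Prop :=
  ∀ e : ℕ, IsLexSeg w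
    {μ | (monomial μ (1 : K) : MvPolynomial (Fin n) K) ∈ I ∧ Finsupp.weight w μ = e} e

namespace LexCharAux

/-- The finsupp on `Fin 2` with values `a, b`. -/
noncomputable def fp (a b : ℕ) : Fin 2 →₀ ℕ :=
  Finsupp.single 0 a + Finsupp.single 1 b

@[simp] lemma fp_apply0 (a b : ℕ) : fp a b 0 = a := by simp [fp]
@[simp] lemma fp_apply1 (a b : ℕ) : fp a b 1 = b := by simp [fp]

lemma fp_eta (μ : Fin 2 →₀ ℕ) : fp (μ 0) (μ 1) = μ := by
  ext s; fin_cases s <;> simp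

lemma weight_eq (q₁ q₂ : ℕ) (μ : Fin 2 →₀ ℕ) :
    Finsupp.weight ![q₁, q₂] μ = μ 0 * q₁ + μ 1 * q₂ := by
  rw [Finsupp.weight_apply, Finsupp.sum_fintype]
  · simp [Fin.sum_univ_two]
  · intro i; simp

lemma le_iff (μ ν : Fin 2 →₀ ℕ) : μ ≤ ν ↔ μ 0 ≤ ν 0 ∧ μ 1 ≤ ν 1 := by
  constructor
  · intro h; exact ⟨h 0, h 1⟩
  · intro ⟨h0, h1⟩ s; fin_cases s <;> assumption

variable {K : Type*} [Field K]

lemma mem_up {I : Ideal (MvPolynomial (Fin 2) K)}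
    (hmon : ∃ A : Set (Fin 2 →₀ ℕ),
      I = Ideal.span ((fun μ => (monomial μ (1 : K) : MvPolynomial (Fin 2) K)) '' A))
    {μ ν : Fin 2 →₀ ℕ} (h : (monomial μ (1 : K) : MvPolynomial (Fin 2) K) ∈ I)
    (hle : μ ≤ ν) : (monomial ν (1 : K) : MvPolynomial (Fin 2) K) ∈ I := by
  classical
  obtain ⟨A, rfl⟩ := hmon
  rw [mem_ideal_span_monomial_image] at h ⊢
  intro xi hxi
  rw [support_monomial, if_neg one_ne_zero, Finset.mem_singleton] at hxi
  subst hxi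
  obtain ⟨si, hsi, hle'⟩ := h μ (by rw [support_monomial, if_neg one_ne_zero]; simp)
  exact ⟨si, hsi, hle'.trans hle⟩

lemma exists_minGen_aux {I : Ideal (MvPolynomial (Fin 2) K)} :
    ∀ N (μ : Fin 2 →₀ ℕ), μ 0 + μ 1 ≤ N →
      (monomial μ (1 : K) : MvPolynomial (Fin 2) K) ∈ I →
      ∃ γ, MinGen I γ ∧ γ ≤ μ := by
  intro N
  induction N with
  | zero =>
    intro μ hμ h
    have h0 : μ 0 = 0 := by omega
    have h1 : μ 1 = 0 := by omega
    have hz : μ = 0 := by ext t; fin_cases t; exacts [h0, h1]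
    refine ⟨μ, ⟨h, fun s hs => ?_⟩, le_refl _⟩
    rw [hz] at hs
    simp at hs
  | succ N ih =>
    intro μ hμ h
    by_cases hc : ∀ s ∈ μ.support,
        (monomial (μ - Finsupp.single s 1) (1 : K) : MvPolynomial (Fin 2) K) ∉ I
    · exact ⟨μ, ⟨h, hc⟩, le_refl _⟩
    · push_neg at hc
      obtain ⟨s, hs, hmem⟩ := hc
      rw [Finsupp.mem_support_iff] at hs
      have hs2 : s = 0 ∨ s = 1 := by
        by_cases h' : s = 0
        · exact Or.inl h'
        · exact Or.inr (Fin.eq_one_of_ne_zero s h')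
      have hsz : (μ - Finsupp.single s 1 : Fin 2 →₀ ℕ) 0 +
          (μ - Finsupp.single s 1 : Fin 2 →₀ ℕ) 1 ≤ N := by
        rw [Finsupp.tsub_apply, Finsupp.tsub_apply]
        rcases hs2 with h' | h' <;> subst h' <;>
          simp [Finsupp.single_apply] <;> omega
      obtain ⟨γ, hγ, hle⟩ := ih _ hsz hmem
      exact ⟨γ, hγ, hle.trans tsub_le_self⟩

lemma exists_minGen {I : Ideal (MvPolynomial (Fin 2) K)} {μ : Fin 2 →₀ ℕ}
    (h : (monomial μ (1 : K) : MvPolynomial (Fin 2) K) ∈ I) :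
    ∃ γ, MinGen I γ ∧ γ ≤ μ :=
  exists_minGen_aux (μ 0 + μ 1) μ le_rfl h

lemma lexLT_of_lt0 {μ ν : Fin 2 →₀ ℕ} (h : μ 0 < ν 0) : LexLT μ ν :=
  ⟨0, h, fun s hs => absurd hs (Fin.not_lt_zero s)⟩

lemma lt0_of_lexLT {q₁ q₂ : ℕ} (hq₂ : 0 < q₂) {μ ν : Fin 2 →₀ ℕ}
    (hw : Finsupp.weight ![q₁, q₂] μ = Finsupp.weight ![q₁, q₂] ν)
    (h : LexLT μ ν) : μ 0 < ν 0 := by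
  rw [weight_eq, weight_eq] at hw
  obtain ⟨k, hk, hprev⟩ := h
  have hk2 : k = 0 ∨ k = 1 := by
    by_cases h' : k = 0
    · exact Or.inl h'
    · exact Or.inr (Fin.eq_one_of_ne_zero k h')
  rcases hk2 with h' | h' <;> subst h'
  · exact hk
  · exfalso
    have h0 : μ 0 = ν 0 := hprev 0 (by decide)
    have := (Nat.mul_lt_mul_right hq₂).mpr hk
    rw [h0] at hw
    omega

/-- If `q₁ ∣ e` and the monomials of degree `e` in `I` form a lexsegment containing
something, then the pure power `X^(e/q₁)` is in `I`. -/
lemma top_mem {q₁ q₂ : ℕ} (h0 : 0 < q₁) (hq₂ : 0 < q₂)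
    {I : Ideal (MvPolynomial (Fin 2) K)} {e : ℕ}
    (hlex : IsLexSeg ![q₁, q₂]
      {μ | (monomial μ (1 : K) : MvPolynomial (Fin 2) K) ∈ I ∧
        Finsupp.weight ![q₁, q₂] μ = e} e)
    (hdvd : q₁ ∣ e) {μ : Fin 2 →₀ ℕ}
    (hμ : (monomial μ (1 : K) : MvPolynomial (Fin 2) K) ∈ I)
    (hw : Finsupp.weight ![q₁, q₂] μ = e) :
    (monomial (fp (e / q₁) 0) (1 : K) : MvPolynomial (Fin 2) K) ∈ I := by
  have hwν : Finsupp.weight ![q₁, q₂] (fp (e / q₁) 0) = e := by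
    rw [weight_eq]; simp [Nat.div_mul_cancel hdvd]
  rw [weight_eq] at hw
  rcases Nat.eq_zero_or_pos (μ 1) with h1 | h1
  · have hz : μ 1 * q₂ = 0 := by rw [h1]; ring
    have he : e / q₁ = μ 0 := Nat.div_eq_of_eq_mul_left h0 (by omega)
    have hfp : fp (e / q₁) 0 = μ := by
      ext t; fin_cases t
      · simpa using he
      · simpa using h1.symm
    rwa [hfp]
  · have hlt : μ 0 < e / q₁ := by
      have hz : q₂ ≤ μ 1 * q₂ := Nat.le_mul_of_pos_left q₂ h1
      have h2 : μ 0 * q₁ < e := by omega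
      have h3 : e / q₁ * q₁ = e := Nat.div_mul_cancel hdvd
      by_contra hc
      push_neg at hc
      have := Nat.mul_le_mul_right q₁ hc
      omega
    exact (hlex.2 μ ⟨hμ, by rw [weight_eq]; omega⟩ _ hwν (lexLT_of_lt0 (by simpa using hlt))).1

end LexCharAux

namespace LexCharAux

lemma delta_eq {q₁ q₂ : ℕ} (hq1 : 0 < q₁) (D a b : ℕ) (hD : D = a * q₁ + b * q₂) :
    D + (q₁ - b % q₁) * q₂ = q₁ * (a + (b / q₁ + 1) * q₂) := by
  have hmod := Nat.div_add_mod b q₁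
  have hl : b % q₁ < q₁ := Nat.mod_lt b hq1
  obtain ⟨g, hg⟩ : ∃ g, b / q₁ = g := ⟨_, rfl⟩
  obtain ⟨ρ, hρ⟩ : ∃ ρ, b % q₁ = ρ := ⟨_, rfl⟩
  simp only [hg, hρ] at hmod hl ⊢
  have hD' : (D : ℤ) = (a : ℤ) * q₁ + (b : ℤ) * q₂ := by exact_mod_cast hD
  have hmod' : (q₁ : ℤ) * (g : ℤ) + (ρ : ℤ) = (b : ℤ) := by exact_mod_cast hmod
  zify [hl.le]
  linear_combination hD' - (q₂ : ℤ) * hmod'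

lemma fp_eq (a b : ℕ) (μ : Fin 2 →₀ ℕ) (h0 : a = μ 0) (h1 : b = μ 1) : fp a b = μ := by
  rw [h0, h1, fp_eta]

end LexCharAux

/-- **Characterization of lexicographic ideals in two variables with coprime weights.**
Let `R = K[X,Y]` with coprime weights `q₁ < q₂` and let `I` be a monomial ideal minimally
generated in degrees `d 1 < … < d r`, such that the monomials of `I` of degree `d i` form
a lexsegment for each `i`.  Then `I` is a lexicographic ideal if and only if `q₁ ∣ d 1`,
or `q₁ ∤ d 1` and there is `1 < s ≤ r` with `q₁ ∣ d s` and `d s ≤ min δ_i`, where for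
each generating degree `d i` not divisible by `q₁`, `δ_i` is the smallest integer of the
form `d i + β·q₂` divisible by `q₁`. -/
theorem lex_ideal_characterization_two_variables
    (K : Type*) [Field K] [CharZero K]
    (q₁ q₂ : ℕ) (h0 : 0 < q₁) (hlt : q₁ < q₂) (hcop : Nat.Coprime q₁ q₂)
    (I : Ideal (MvPolynomial (Fin 2) K))
    (hmon : ∃ A : Set (Fin 2 →₀ ℕ),
      I = Ideal.span ((fun μ => (monomial μ (1 : K) : MvPolynomial (Fin 2) K)) '' A))
    (r : ℕ) (hr : 0 < r) (d : Fin r → ℕ) (hd : StrictMono d)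
    (hdegs : ∀ μ : Fin 2 →₀ ℕ, MinGen I μ → ∃ i, Finsupp.weight ![q₁, q₂] μ = d i)
    (hocc : ∀ i : Fin r, ∃ μ : Fin 2 →₀ ℕ, MinGen I μ ∧ Finsupp.weight ![q₁, q₂] μ = d i)
    (hlexcomp : ∀ i : Fin r,
      IsLexSeg ![q₁, q₂]
        {μ | (monomial μ (1 : K) : MvPolynomial (Fin 2) K) ∈ I ∧
          Finsupp.weight ![q₁, q₂] μ = d i} (d i)) :
    IsLexIdealMon ![q₁, q₂] I ↔
      (q₁ ∣ d ⟨0, hr⟩ ∨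
        (¬ q₁ ∣ d ⟨0, hr⟩ ∧
          ∃ s : Fin r, ⟨0, hr⟩ < s ∧ q₁ ∣ d s ∧
            ∀ i : Fin r, ¬ q₁ ∣ d i →
              d s ≤ sInf {e : ℕ | q₁ ∣ e ∧ ∃ β : ℕ, e = d i + β * q₂})) := by
  classical
  have hq2 : 0 < q₂ := h0.trans hlt
  constructor
  · -- forward direction
    intro hI
    by_cases hd1 : q₁ ∣ d ⟨0, hr⟩
    · exact Or.inl hd1
    refine Or.inr ⟨hd1, ?_⟩
    have key : ∀ i : Fin r, ∀ e : ℕ, q₁ ∣ e → (∃ β, e = d i + β * q₂) →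
        ∃ γ, MinGen I γ ∧ γ 1 = 0 ∧ γ 0 * q₁ ≤ e := by
      rintro i e hdvd ⟨β, hβ⟩
      obtain ⟨μ, hμgen, hμw⟩ := hocc i
      have hmemν : (monomial (μ + LexCharAux.fp 0 β) (1 : K) : MvPolynomial (Fin 2) K) ∈ I :=
        LexCharAux.mem_up hmon hμgen.1
          ((LexCharAux.le_iff _ _).mpr ⟨by simp, by simp⟩)
      have hwν : Finsupp.weight ![q₁, q₂] (μ + LexCharAux.fp 0 β) = e := by
        rw [map_add, hμw, LexCharAux.weight_eq, hβ]; simp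
      have htop := LexCharAux.top_mem h0 hq2 (hI e) hdvd hmemν hwν
      obtain ⟨γ, hγ, hγle⟩ := LexCharAux.exists_minGen htop
      rw [LexCharAux.le_iff] at hγle
      refine ⟨γ, hγ, Nat.le_zero.mp (by simpa using hγle.2), ?_⟩
      calc γ 0 * q₁ ≤ e / q₁ * q₁ := Nat.mul_le_mul_right _ (by simpa using hγle.1)
        _ = e := Nat.div_mul_cancel hdvd
    have uniq : ∀ γ γ' : Fin 2 →₀ ℕ, MinGen I γ → MinGen I γ' → γ 1 = 0 → γ' 1 = 0 →
        γ = γ' := by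
      have main : ∀ γ γ' : Fin 2 →₀ ℕ, MinGen I γ → MinGen I γ' → γ 1 = 0 →
          γ 0 < γ' 0 → False := by
        intro γ γ' hγ hγ' h1 hlt'
        have hsup : (0 : Fin 2) ∈ γ'.support := Finsupp.mem_support_iff.mpr (by omega)
        refine hγ'.2 0 hsup (LexCharAux.mem_up hmon hγ.1 ?_)
        rw [LexCharAux.le_iff]
        constructor
        · rw [Finsupp.tsub_apply]
          have hone : (Finsupp.single (0 : Fin 2) 1) (0 : Fin 2) = 1 := by simp
          rw [hone]
          omega
        · rw [Finsupp.tsub_apply, h1]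
          exact Nat.zero_le _
      intro γ γ' hγ hγ' h1 h1'
      have h00 : γ 0 = γ' 0 := by
        rcases lt_trichotomy (γ 0) (γ' 0) with h | h | h
        · exact absurd h (fun h => main γ γ' hγ hγ' h1 h)
        · exact h
        · exact absurd h (fun h => main γ' γ hγ' hγ h1' h)
      ext t
      fin_cases t
      · exact h00
      · exact h1.trans h1'.symm
    obtain ⟨μ₀, hμ₀gen, hμ₀w⟩ := hocc ⟨0, hr⟩
    rw [LexCharAux.weight_eq] at hμ₀w
    have hδ₀ := LexCharAux.delta_eq (q₂ := q₂) h0 (d ⟨0, hr⟩) (μ₀ 0) (μ₀ 1) hμ₀w.symm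
    obtain ⟨γ, hγgen, hγ1, hγbd⟩ := key ⟨0, hr⟩ _ ⟨_, hδ₀⟩ ⟨_, rfl⟩
    obtain ⟨s, hs⟩ := hdegs γ hγgen
    rw [LexCharAux.weight_eq, hγ1] at hs
    have hsw : d s = γ 0 * q₁ := by omega
    have hsd : q₁ ∣ d s := ⟨γ 0, by rw [hsw, mul_comm]⟩
    refine ⟨s, ?_, hsd, ?_⟩
    · rw [Fin.lt_def]
      by_contra h'
      push_neg at h'
      have hs0 : s = ⟨0, hr⟩ := Fin.ext (by simpa using h')
      rw [hs0] at hsd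
      exact hd1 hsd
    · intro i hqi
      obtain ⟨μi, hμigen, hμiw⟩ := hocc i
      rw [LexCharAux.weight_eq] at hμiw
      have hδi := LexCharAux.delta_eq (q₂ := q₂) h0 (d i) (μi 0) (μi 1) hμiw.symm
      have hne : {e : ℕ | q₁ ∣ e ∧ ∃ β : ℕ, e = d i + β * q₂}.Nonempty :=
        ⟨d i + (q₁ - μi 1 % q₁) * q₂, ⟨_, hδi⟩, _, rfl⟩
      obtain ⟨hdvd', hβ'⟩ := Nat.sInf_mem hne
      obtain ⟨γ', hγ'gen, hγ'1, hγ'bd⟩ := key i _ hdvd' hβ'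
      rw [hsw, uniq γ γ' hγgen hγ'gen hγ1 hγ'1]
      exact hγ'bd
  · -- backward direction
    intro hRHS
    have hpure : ∃ c : ℕ,
        (monomial (LexCharAux.fp c 0) (1 : K) : MvPolynomial (Fin 2) K) ∈ I ∧
        ∀ i : Fin r, ¬ q₁ ∣ d i → ∀ β : ℕ, q₁ ∣ d i + β * q₂ → c * q₁ ≤ d i + β * q₂ := by
      rcases hRHS with hd1 | ⟨hd1, s, hs0, hsd, hsmin⟩
      · obtain ⟨μ, hμgen, hμw⟩ := hocc ⟨0, hr⟩
        refine ⟨d ⟨0, hr⟩ / q₁,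
          LexCharAux.top_mem h0 hq2 (hlexcomp ⟨0, hr⟩) hd1 hμgen.1 hμw, ?_⟩
        intro i hqi β hβ
        have hmono : d ⟨0, hr⟩ ≤ d i := hd.monotone (by rw [Fin.le_def]; exact Nat.zero_le _)
        rw [Nat.div_mul_cancel hd1]
        omega
      · obtain ⟨μ, hμgen, hμw⟩ := hocc s
        refine ⟨d s / q₁, LexCharAux.top_mem h0 hq2 (hlexcomp s) hsd hμgen.1 hμw, ?_⟩
        intro i hqi β hβ
        rw [Nat.div_mul_cancel hsd]
        exact (hsmin i hqi).trans (Nat.sInf_le ⟨hβ, β, rfl⟩)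
    obtain ⟨c, hcI, hcbd⟩ := hpure
    intro e
    refine ⟨fun μ h => h.2, ?_⟩
    rintro μ ⟨hμI, hμw⟩ ν hνw hlex
    refine ⟨?_, hνw⟩
    have h01 : μ 0 < ν 0 := LexCharAux.lt0_of_lexLT hq2 (hμw.trans hνw.symm) hlex
    obtain ⟨γ, hγgen, hγle⟩ := LexCharAux.exists_minGen hμI
    obtain ⟨i, hγw⟩ := hdegs γ hγgen
    rw [LexCharAux.le_iff] at hγle
    obtain ⟨x, hx⟩ := Nat.exists_eq_add_of_le hγle.1
    obtain ⟨y, hy⟩ := Nat.exists_eq_add_of_le hγle.2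
    rw [LexCharAux.weight_eq] at hμw hνw hγw
    have hν1lt : ν 1 < μ 1 := by
      by_contra hc
      push_neg at hc
      have e1 : μ 1 * q₂ ≤ ν 1 * q₂ := Nat.mul_le_mul_right _ hc
      have e2 : μ 0 * q₁ < ν 0 * q₁ := (Nat.mul_lt_mul_right h0).mpr h01
      omega
    obtain ⟨u, hu⟩ := Nat.exists_eq_add_of_le h01.le
    obtain ⟨v, hv⟩ := Nat.exists_eq_add_of_le hν1lt.le
    have hupos : 0 < u := by omega
    have hvq : v * q₂ = u * q₁ := by
      have e1 : (μ 0 + u) * q₁ = μ 0 * q₁ + u * q₁ := add_mul _ _ _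
      have e2 : (ν 1 + v) * q₂ = ν 1 * q₂ + v * q₂ := add_mul _ _ _
      rw [hu, e1] at hνw
      rw [hv, e2] at hμw
      omega
    obtain ⟨t, ht⟩ : q₂ ∣ u :=
      Nat.Coprime.dvd_of_dvd_mul_right hcop.symm ⟨v, by rw [← hvq, mul_comm]⟩
    have htpos : 0 < t := by
      rcases Nat.eq_zero_or_pos t with h | h
      · rw [h, mul_zero] at ht; omega
      · exact h
    have hvt : v = t * q₁ := by
      have hvv : v * q₂ = (t * q₁) * q₂ := by rw [hvq, ht]; ring
      exact Nat.eq_of_mul_eq_mul_right hq2 hvv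
    have hmod := Nat.div_add_mod (γ 1) q₁
    have hρlt : γ 1 % q₁ < q₁ := Nat.mod_lt _ h0
    obtain ⟨g, hg⟩ : ∃ g, γ 1 / q₁ = g := ⟨_, rfl⟩
    obtain ⟨ρ, hρ⟩ : ∃ ρ, γ 1 % q₁ = ρ := ⟨_, rfl⟩
    rw [hg, hρ] at hmod
    rw [hρ] at hρlt
    by_cases hcase : ρ ≤ ν 1
    · -- subcase 1 : there is a monomial of degree (d i) under ν
      obtain ⟨n, hn⟩ : ∃ n, min (ν 1) (γ 1) = n := ⟨_, rfl⟩
      have hnρ : ρ ≤ n := by omega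
      have hdm2 := Nat.div_add_mod (n - ρ) q₁
      have hm2lt : (n - ρ) % q₁ < q₁ := Nat.mod_lt _ h0
      obtain ⟨k, hk⟩ : ∃ k, (n - ρ) / q₁ = k := ⟨_, rfl⟩
      rw [hk] at hdm2
      have e3 : q₁ * k = k * q₁ := mul_comm _ _
      have hτ1le : ρ + k * q₁ ≤ n := by omega
      have hmax : n < ρ + k * q₁ + q₁ := by omega
      have hkg : k ≤ g := by
        have e4 : q₁ * g = g * q₁ := mul_comm _ _
        have h5 : k * q₁ ≤ g * q₁ := by omega
        exact Nat.le_of_mul_le_mul_right h5 h0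
      obtain ⟨m, hm⟩ := Nat.exists_eq_add_of_le hkg
      subst hm
      have hτw : Finsupp.weight ![q₁, q₂]
          (LexCharAux.fp (γ 0 + m * q₂) (ρ + k * q₁)) = d i := by
        rw [LexCharAux.weight_eq]
        simp only [LexCharAux.fp_apply0, LexCharAux.fp_apply1]
        rw [← hγw, ← hmod]
        ring
      have hτI : (monomial (LexCharAux.fp (γ 0 + m * q₂) (ρ + k * q₁)) (1 : K) :
          MvPolynomial (Fin 2) K) ∈ I := by
        rcases Nat.eq_zero_or_pos m with hm0 | hm0
        · subst hm0
          have e5 : q₁ * (k + 0) = k * q₁ := by ring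
          have hτγ : LexCharAux.fp (γ 0 + 0 * q₂) (ρ + k * q₁) = γ :=
            LexCharAux.fp_eq _ _ _ (by omega) (by omega)
          rw [hτγ]
          exact hγgen.1
        · refine ((hlexcomp i).2 γ ⟨hγgen.1, by rw [LexCharAux.weight_eq]; exact hγw⟩ _ hτw
            (LexCharAux.lexLT_of_lt0 ?_)).1
          simp only [LexCharAux.fp_apply0]
          have : 0 < m * q₂ := Nat.mul_pos hm0 hq2
          omega
      have hmt : m ≤ t := by
        rcases Nat.eq_zero_or_pos m with hm0 | hm0
        · omega
        · have e5 : q₁ * (k + m) = k * q₁ + m * q₁ := by ring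
          have e6 : 1 * q₁ ≤ m * q₁ := Nat.mul_le_mul_right _ hm0
          have hng : n < γ 1 := by omega
          have hnν : n = ν 1 := by omega
          have e7 : m * q₁ < (t + 1) * q₁ := by
            have e8 : (t + 1) * q₁ = t * q₁ + q₁ := by ring
            omega
          have := lt_of_mul_lt_mul_right e7 (Nat.zero_le q₁)
          omega
      refine LexCharAux.mem_up hmon hτI ?_
      rw [LexCharAux.le_iff]
      constructor
      · simp only [LexCharAux.fp_apply0]
        have e9 : m * q₂ ≤ t * q₂ := Nat.mul_le_mul_right _ hmt
        have e10 : q₂ * t = t * q₂ := mul_comm _ _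
        omega
      · simp only [LexCharAux.fp_apply1]
        omega
    · -- subcase 2 : use the pure power generator
      push_neg at hcase
      have hqi : ¬ q₁ ∣ d i := by
        intro hdvd
        have h1 : q₁ ∣ γ 1 * q₂ := by
          have hsub : γ 1 * q₂ = d i - γ 0 * q₁ := by omega
          rw [hsub]
          exact Nat.dvd_sub hdvd (dvd_mul_left q₁ (γ 0))
        have h2 : q₁ ∣ γ 1 := hcop.dvd_of_dvd_mul_right h1
        obtain ⟨w, hw2⟩ := h2
        have h3 : γ 1 % q₁ = 0 := by rw [hw2, Nat.mul_mod_right]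
        omega
      have hδ := LexCharAux.delta_eq (q₂ := q₂) h0 (d i) (γ 0) (γ 1) hγw.symm
      rw [hg, hρ] at hδ
      have hbd := hcbd i hqi (q₁ - ρ) ⟨_, hδ⟩
      have htg : g + 1 ≤ t := by
        have e5 : q₁ * g = g * q₁ := mul_comm _ _
        have e7 : g * q₁ < t * q₁ := by omega
        have := lt_of_mul_lt_mul_right e7 (Nat.zero_le q₁)
        omega
      have hcν : c ≤ ν 0 := by
        have e1 : ν 0 * q₁ = γ 0 * q₁ + x * q₁ + t * (q₁ * q₂) := by
          rw [hu, ht, hx]; ring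
        have e2 : q₁ * (γ 0 + (g + 1) * q₂) = γ 0 * q₁ + (g + 1) * (q₁ * q₂) := by ring
        have e3 : (g + 1) * (q₁ * q₂) ≤ t * (q₁ * q₂) := Nat.mul_le_mul_right _ htg
        have h4 : c * q₁ ≤ ν 0 * q₁ := by omega
        exact Nat.le_of_mul_le_mul_right h4 h0
      refine LexCharAux.mem_up hmon hcI ?_
      rw [LexCharAux.le_iff]
      exact ⟨by simpa using hcν, by simp⟩
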